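/- Bubble function norm equivalence: Let K be a non-degenerate simplex in ℝ^d with interior bubble function b_K (the scaled product of the d+1 barycentric coordinates, normalized so 0 ≤ b_K ≤ 1, b_K = 0 on ∂K). For each k ∈ ℕ there exist constants c₁, c₂ > 0, depending only on k and the shape-regularity of K, such that c₁ ‖φ‖_{L²(K)} ≤ ‖φ b_K^{1/2}‖_{L²(K)} ≤ c₂ ‖φ‖_{L²(K)} for all polynomials φ ∈ ℙ^k(K). -/

import Mathlib

open MeasureTheory Metric Set

noncomputable section

abbrev Evec (d : ℕ) := EuclideanSpace ℝ (Fin d)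

def pderiv' {d : ℕ} (f : Evec d → ℝ) (i : Fin d) (x : Evec d) : ℝ :=
  fderiv ℝ f x (EuclideanSpace.single i 1)

def gradM {d : ℕ} (u : Evec d → Evec d) (x : Evec d) : Matrix (Fin d) (Fin d) ℝ :=
  fun i j => fderiv ℝ u x (EuclideanSpace.single j 1) i

def symGrad {d : ℕ} (u : Evec d → Evec d) (x : Evec d) : Matrix (Fin d) (Fin d) ℝ :=
  fun i j => (gradM u x i j + gradM u x j i) / 2

def mInner {d : ℕ} (A B : Matrix (Fin d) (Fin d) ℝ) : ℝ := ∑ i, ∑ j, A i j * B i j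

def divg {d : ℕ} (u : Evec d → Evec d) (x : Evec d) : ℝ := ∑ i, gradM u x i i

def dotv {d : ℕ} (a b : Fin d → ℝ) : ℝ := ∑ i, a i * b i

def L2normSq {d : ℕ} (Ω : Set (Evec d)) (u : Evec d → Evec d) : ℝ :=
  ∫ x in Ω, ‖u x‖^2

def H1normSq {d : ℕ} (Ω : Set (Evec d)) (u : Evec d → Evec d) : ℝ :=
  ∫ x in Ω, (‖u x‖^2 + ‖fderiv ℝ u x‖^2)

def L2normSqS {d : ℕ} (Ω : Set (Evec d)) (f : Evec d → ℝ) : ℝ :=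
  ∫ x in Ω, (f x)^2

def H1normSqS {d : ℕ} (Ω : Set (Evec d)) (f : Evec d → ℝ) : ℝ :=
  ∫ x in Ω, ((f x)^2 + ‖fderiv ℝ f x‖^2)

def MemH1 {d : ℕ} (Ω : Set (Evec d)) (u : Evec d → Evec d) : Prop :=
  DifferentiableOn ℝ u Ω ∧ IntegrableOn (fun x => ‖u x‖^2) Ω ∧
    IntegrableOn (fun x => ‖fderiv ℝ u x‖^2) Ω

def MemHdiv {d : ℕ} (Ω : Set (Evec d)) (u : Evec d → Evec d) : Prop :=
  DifferentiableOn ℝ u Ω ∧ IntegrableOn (fun x => ‖u x‖^2) Ω ∧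
    IntegrableOn (fun x => (divg u x)^2) Ω

def HdivnormSq {d : ℕ} (Ω : Set (Evec d)) (u : Evec d → Evec d) : ℝ :=
  ∫ x in Ω, (‖u x‖^2 + (divg u x)^2)


/-- The element bubble function of a simplex with barycentric coordinate system
`b`: normalized product of the `d+1` barycentric coordinates. -/
def bubbleK {d : ℕ} (b : AffineBasis (Fin (d + 1)) ℝ (Evec d)) (x : Evec d) : ℝ :=
  ((d : ℝ) + 1) ^ (d + 1) * ∏ i, b.coord i x

-- ## Auxiliary development

section Aux1

def ev {d : ℕ} (P : MvPolynomial (Fin d) ℝ) (x : Evec d) : ℝ :=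
  MvPolynomial.eval (fun i => x i) P

lemma ev_continuous {d : ℕ} (P : MvPolynomial (Fin d) ℝ) : Continuous (ev P) := by
  have h := AnalyticOnNhd.eval_continuousLinearMap
    ((PiLp.continuousLinearEquiv 2 ℝ (fun _ : Fin d => ℝ)) :
      Evec d →L[ℝ] (Fin d → ℝ)) P
  have := h.continuousOn (𝕜 := ℝ)
  exact continuousOn_univ.mp this

lemma ev_eq_zero_of_eqOn_open {d : ℕ} {P : MvPolynomial (Fin d) ℝ} {U : Set (Evec d)}
    (hU : IsOpen U) {x₀ : Evec d} (hx₀ : x₀ ∈ U) (h : ∀ x ∈ U, ev P x = 0) : P = 0 := by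
  have hA : AnalyticOnNhd ℝ (ev P) Set.univ := by
    have h := AnalyticOnNhd.eval_continuousLinearMap
      ((PiLp.continuousLinearEquiv 2 ℝ (fun _ : Fin d => ℝ)) :
        Evec d →L[ℝ] (Fin d → ℝ)) P
    exact h
  have hz : EqOn (ev P) 0 Set.univ := by
    apply hA.eqOn_zero_of_preconnected_of_eventuallyEq_zero isPreconnected_univ
      (Set.mem_univ x₀)
    filter_upwards [hU.mem_nhds hx₀] with x hx using h x hx
  apply MvPolynomial.funext
  intro y
  have := hz (Set.mem_univ ((EuclideanSpace.equiv (Fin d) ℝ).symm y))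
  simpa [ev] using this

lemma aeval_eq_eval' {d : ℕ} (f : Fin d → ℝ) (p : MvPolynomial (Fin d) ℝ) :
    MvPolynomial.aeval f p = MvPolynomial.eval f p := by
  rw [MvPolynomial.aeval_def, Algebra.algebraMap_self, MvPolynomial.eval₂_id]

lemma eval_aeval' {d : ℕ} (f : Fin d → ℝ) (g : Fin d → MvPolynomial (Fin d) ℝ)
    (p : MvPolynomial (Fin d) ℝ) :
    MvPolynomial.eval f (MvPolynomial.aeval g p)
      = MvPolynomial.eval (fun i => MvPolynomial.eval f (g i)) p := by
  rw [← aeval_eq_eval' f, MvPolynomial.comp_aeval_apply]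
  simp [aeval_eq_eval']

lemma totalDegree_aeval_le_one {d : ℕ} (g : Fin d → MvPolynomial (Fin d) ℝ)
    (hg : ∀ i, (g i).totalDegree ≤ 1) (P : MvPolynomial (Fin d) ℝ) :
    (MvPolynomial.aeval g P).totalDegree ≤ P.totalDegree := by
  conv_lhs => rw [P.as_sum]
  rw [map_sum]
  refine (MvPolynomial.totalDegree_finset_sum _ _).trans ?_
  refine Finset.sup_le fun s hs => ?_
  rw [MvPolynomial.aeval_monomial]
  refine (MvPolynomial.totalDegree_mul _ _).trans ?_
  have h1 : (algebraMap ℝ (MvPolynomial (Fin d) ℝ) (P.coeff s)).totalDegree = 0 := by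
    simpa using MvPolynomial.totalDegree_C (σ := Fin d) (P.coeff s)
  rw [h1, zero_add]
  refine le_trans ?_ (MvPolynomial.le_totalDegree hs)
  rw [Finsupp.prod]
  refine (MvPolynomial.totalDegree_finset_prod _ _).trans ?_
  have : ∀ i ∈ s.support, ((g i) ^ (s i)).totalDegree ≤ s i := by
    intro i _
    refine (MvPolynomial.totalDegree_pow _ _).trans ?_
    calc s i * (g i).totalDegree ≤ s i * 1 := Nat.mul_le_mul_left _ (hg i)
    _ = s i := Nat.mul_one _
  refine (Finset.sum_le_sum this).trans ?_
  rw [Finsupp.sum]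

variable {d : ℕ}

/-- The linear equivalence mapping one affine basis frame to another. -/
def Lmap (b₀ b : AffineBasis (Fin (d + 1)) ℝ (Evec d)) : Evec d ≃ₗ[ℝ] Evec d :=
  (b₀.basisOf 0).equiv (b.basisOf 0) (Equiv.refl _)

/-- The affine map taking `b₀` to `b`. -/
def Fmap (b₀ b : AffineBasis (Fin (d + 1)) ℝ (Evec d)) (x : Evec d) : Evec d :=
  b 0 + Lmap b₀ b (x - b₀ 0)

lemma Fmap_apply_basis (b₀ b : AffineBasis (Fin (d + 1)) ℝ (Evec d)) (j : Fin (d + 1)) :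
    Fmap b₀ b (b₀ j) = b j := by
  rcases eq_or_ne j 0 with rfl | hj
  · simp [Fmap]
  · have h := (b₀.basisOf 0).equiv_apply (i := ⟨j, hj⟩) (b.basisOf 0) (Equiv.refl _)
    rw [Fmap]
    have h1 : b₀ j - b₀ 0 = b₀.basisOf 0 ⟨j, hj⟩ := by
      rw [AffineBasis.basisOf_apply]; simp [vsub_eq_sub]
    rw [h1]
    show b 0 + ((b₀.basisOf 0).equiv (b.basisOf 0) (Equiv.refl _)) ((b₀.basisOf 0) ⟨j, hj⟩) = b j
    rw [h]
    rw [AffineBasis.basisOf_apply]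
    simp [vsub_eq_sub]

/-- `Fmap` as an affine map. -/
def FmapA (b₀ b : AffineBasis (Fin (d + 1)) ℝ (Evec d)) : Evec d →ᵃ[ℝ] Evec d where
  toFun := Fmap b₀ b
  linear := (Lmap b₀ b : Evec d →ₗ[ℝ] Evec d)
  map_vadd' p v := by
    simp only [Fmap, vadd_eq_add]
    rw [show v + p - b₀ 0 = v + (p - b₀ 0) by abel, map_add]
    simp only [LinearEquiv.coe_coe]
    abel

lemma coord_Fmap (b₀ b : AffineBasis (Fin (d + 1)) ℝ (Evec d)) (i : Fin (d + 1)) (x : Evec d) :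
    b.coord i (Fmap b₀ b x) = b₀.coord i x := by
  classical
  have hx : x = Finset.univ.affineCombination ℝ b₀ (fun j => b₀.coord j x) :=
    (b₀.affineCombination_coord_eq_self x).symm
  have hw : (Finset.univ.sum fun j => b₀.coord j x) = 1 := b₀.sum_coord_apply_eq_one x
  conv_lhs => rw [hx]
  rw [show Fmap b₀ b = ⇑(FmapA b₀ b) from rfl]
  rw [Finset.map_affineCombination _ _ _ hw (FmapA b₀ b)]
  rw [Finset.map_affineCombination _ _ _ hw (b.coord i)]
  rw [show ⇑(b.coord i) ∘ ⇑(FmapA b₀ b) ∘ ⇑b₀ = fun j => b.coord i (b j) by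
    funext j; simp only [Function.comp_apply]; congr 1; exact Fmap_apply_basis b₀ b j]
  rw [Finset.univ.affineCombination_eq_linear_combination _ _ hw]
  simp [AffineBasis.coord_apply, Finset.sum_ite_eq']

lemma image_Fmap_convexHull (b₀ b : AffineBasis (Fin (d + 1)) ℝ (Evec d)) :
    Fmap b₀ b '' (convexHull ℝ (Set.range ⇑b₀)) = convexHull ℝ (Set.range ⇑b) := by
  rw [show Fmap b₀ b = ⇑(FmapA b₀ b) from rfl, AffineMap.image_convexHull]
  congr 1
  rw [← Set.range_comp]
  exact congrArg Set.range (funext fun j => Fmap_apply_basis b₀ b j)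

lemma integral_Fmap (b₀ b : AffineBasis (Fin (d + 1)) ℝ (Evec d)) (g : Evec d → ℝ) :
    ∫ x in convexHull ℝ (Set.range ⇑b), g x
      = |LinearMap.det ((Lmap b₀ b : Evec d →ₗ[ℝ] Evec d))|
        * ∫ x in convexHull ℝ (Set.range ⇑b₀), g (Fmap b₀ b x) := by
  have hK₀c : IsCompact (convexHull ℝ (Set.range ⇑b₀)) :=
    (Set.finite_range ⇑b₀).isCompact_convexHull ℝ
  have hK₀m : MeasurableSet (convexHull ℝ (Set.range ⇑b₀)) := hK₀c.isClosed.measurableSet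
  set A : Evec d →L[ℝ] Evec d :=
    LinearMap.toContinuousLinearMap ((Lmap b₀ b : Evec d →ₗ[ℝ] Evec d)) with hA
  have hFeq : Fmap b₀ b = fun x => A x + (b 0 - Lmap b₀ b (b₀ 0)) := by
    funext x
    simp only [Fmap, map_sub, hA, LinearMap.coe_toContinuousLinearMap', LinearEquiv.coe_coe]
    abel
  have hF' : ∀ x ∈ convexHull ℝ (Set.range ⇑b₀),
      HasFDerivWithinAt (Fmap b₀ b) A (convexHull ℝ (Set.range ⇑b₀)) x := by
    intro x _
    rw [hFeq]
    exact ((A.hasFDerivAt).add_const _).hasFDerivWithinAt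
  have hInj : Set.InjOn (Fmap b₀ b) (convexHull ℝ (Set.range ⇑b₀)) := by
    intro x _ y _ hxy
    simp only [Fmap] at hxy
    have := (Lmap b₀ b).injective (by
      have := add_left_cancel hxy
      exact this)
    exact sub_left_injective this
  have hCoV := integral_image_eq_integral_abs_det_fderiv_smul volume hK₀m hF' hInj g
  rw [← image_Fmap_convexHull b₀ b, hCoV]
  have hdet : A.det = LinearMap.det ((Lmap b₀ b : Evec d →ₗ[ℝ] Evec d)) := by
    simp [ContinuousLinearMap.det, hA]
  simp only [hdet, smul_eq_mul]
  rw [integral_const_mul]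

lemma det_Lmap_pos (b₀ b : AffineBasis (Fin (d + 1)) ℝ (Evec d)) :
    0 < |LinearMap.det ((Lmap b₀ b : Evec d →ₗ[ℝ] Evec d))| := by
  rw [abs_pos]
  exact (LinearEquiv.isUnit_det' (Lmap b₀ b)).ne_zero

section BubbleFacts

variable {d : ℕ}

lemma coord_nonneg {b : AffineBasis (Fin (d + 1)) ℝ (Evec d)} {x : Evec d}
    (hx : x ∈ convexHull ℝ (Set.range ⇑b)) (i : Fin (d + 1)) : 0 ≤ b.coord i x := by
  rw [AffineBasis.convexHull_eq_nonneg_coord] at hx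
  exact hx i

lemma coord_le_one {b : AffineBasis (Fin (d + 1)) ℝ (Evec d)} {x : Evec d}
    (hx : x ∈ convexHull ℝ (Set.range ⇑b)) (i : Fin (d + 1)) : b.coord i x ≤ 1 := by
  have hsum := b.sum_coord_apply_eq_one x
  have : ∑ j ∈ Finset.univ \ {i}, b.coord j x ≥ 0 :=
    Finset.sum_nonneg fun j _ => coord_nonneg hx j
  have h := Finset.sum_eq_sum_sdiff_singleton_add (Finset.mem_univ i) (fun j => b.coord j x)
  linarith [hsum, h ▸ hsum]

lemma bubbleK_nonneg {b : AffineBasis (Fin (d + 1)) ℝ (Evec d)} {x : Evec d}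
    (hx : x ∈ convexHull ℝ (Set.range ⇑b)) : 0 ≤ bubbleK b x := by
  apply mul_nonneg (by positivity)
  exact Finset.prod_nonneg fun i _ => coord_nonneg hx i

lemma bubbleK_le {b : AffineBasis (Fin (d + 1)) ℝ (Evec d)} {x : Evec d}
    (hx : x ∈ convexHull ℝ (Set.range ⇑b)) : bubbleK b x ≤ ((d : ℝ) + 1) ^ (d + 1) := by
  have : ∏ i, b.coord i x ≤ 1 :=
    Finset.prod_le_one (fun i _ => coord_nonneg hx i) (fun i _ => coord_le_one hx i)
  calc bubbleK b x ≤ ((d : ℝ) + 1) ^ (d + 1) * 1 := by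
        apply mul_le_mul_of_nonneg_left this (by positivity)
    _ = _ := mul_one _

lemma bubbleK_pos {b : AffineBasis (Fin (d + 1)) ℝ (Evec d)} {x : Evec d}
    (hx : x ∈ interior (convexHull ℝ (Set.range ⇑b))) : 0 < bubbleK b x := by
  rw [AffineBasis.interior_convexHull] at hx
  exact mul_pos (by positivity) (Finset.prod_pos fun i _ => hx i)

lemma bubbleK_continuous (b : AffineBasis (Fin (d + 1)) ℝ (Evec d)) :
    Continuous (bubbleK b) := by
  apply Continuous.mul continuous_const
  exact continuous_finset_prod _ fun i _ => continuous_barycentric_coord b i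

end BubbleFacts

lemma Lmap_apply_coord {d : ℕ} (L : Evec d →ₗ[ℝ] Evec d) (x : Evec d) (i : Fin d) :
    L x i = ∑ j, L (EuclideanSpace.single j 1) i * x j := by
  have hx : x = ∑ j, x j • (EuclideanSpace.basisFun (Fin d) ℝ) j := by
    have := (EuclideanSpace.basisFun (Fin d) ℝ).sum_repr x
    simp only [EuclideanSpace.basisFun_repr] at this
    exact this.symm
  conv_lhs => rw [hx, map_sum]
  have : ∀ j : Fin d, L (x j • (EuclideanSpace.basisFun (Fin d) ℝ) j)
      = x j • L (EuclideanSpace.single j 1) := by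
    intro j
    rw [_root_.map_smul, EuclideanSpace.basisFun_apply]
  simp only [this]
  rw [show ((∑ j, x j • L (EuclideanSpace.single j 1)) : Evec d) i
      = ∑ j, (x j • L (EuclideanSpace.single j 1) : Evec d) i from by rw [WithLp.ofLp_sum]; exact Finset.sum_apply i _ _]
  refine Finset.sum_congr rfl fun j _ => ?_
  simp [mul_comm]

lemma bubbleK_Fmap {d : ℕ} (b₀ b : AffineBasis (Fin (d + 1)) ℝ (Evec d)) (x : Evec d) :
    bubbleK b (Fmap b₀ b x) = bubbleK b₀ x := by
  unfold bubbleK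
  congr 1
  exact Finset.prod_congr rfl fun i _ => coord_Fmap b₀ b i x

lemma exists_comp_poly {d : ℕ} (b₀ b : AffineBasis (Fin (d + 1)) ℝ (Evec d))
    (P : MvPolynomial (Fin d) ℝ) :
    ∃ Q : MvPolynomial (Fin d) ℝ, Q.totalDegree ≤ P.totalDegree ∧
      ∀ x : Evec d, ev Q x = ev P (Fmap b₀ b x) := by
  set L := ((Lmap b₀ b : Evec d →ₗ[ℝ] Evec d)) with hL
  set g : Fin d → MvPolynomial (Fin d) ℝ := fun i =>
    MvPolynomial.C ((b 0 : Evec d) i - (L (b₀ 0) : Evec d) i)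
      + ∑ j, MvPolynomial.C ((L (EuclideanSpace.single j 1) : Evec d) i) * MvPolynomial.X j
    with hg
  have hgdeg : ∀ i, (g i).totalDegree ≤ 1 := by
    intro i
    refine (MvPolynomial.totalDegree_add _ _).trans (max_le ?_ ?_)
    · rw [MvPolynomial.totalDegree_C]; exact Nat.zero_le 1
    · refine (MvPolynomial.totalDegree_finset_sum _ _).trans (Finset.sup_le fun j _ => ?_)
      refine (MvPolynomial.totalDegree_mul _ _).trans ?_
      rw [MvPolynomial.totalDegree_C, MvPolynomial.totalDegree_X]
  refine ⟨MvPolynomial.aeval g P, totalDegree_aeval_le_one g hgdeg P, fun x => ?_⟩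
  unfold ev
  rw [eval_aeval']
  have harg : (fun i => MvPolynomial.eval (fun j => x j) (g i)) = fun i => Fmap b₀ b x i := by
    funext i
    show MvPolynomial.eval (fun j => x j) (g i) = Fmap b₀ b x i
    have hgi   : MvPolynomial.eval (fun j => x j) (g i)
        = ((b 0 : Evec d) i - (L (b₀ 0) : Evec d) i)
          + ∑ j, (L (EuclideanSpace.single j 1) : Evec d) i * x j := by
      simp [hg]
    rw [hgi]
    have hF : Fmap b₀ b x = b 0 + (L x - L (b₀ 0)) := by
      simp only [Fmap, hL]
      rw [show (Lmap b₀ b) (x - b₀ 0) = Lmap b₀ b x - Lmap b₀ b (b₀ 0) from map_sub _ _ _]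
      rfl
    rw [hF]
    have happ : (b 0 + (L x - L (b₀ 0)) : Evec d) i
        = (b 0 : Evec d) i + ((L x : Evec d) i - (L (b₀ 0) : Evec d) i) := rfl
    rw [happ, Lmap_apply_coord L x i]
    ring
  rw [harg]

section Ref
variable {d : ℕ} (b₀ : AffineBasis (Fin (d + 1)) ℝ (Evec d))

lemma K₀_compact : IsCompact (convexHull ℝ (Set.range ⇑b₀)) :=
  (Set.finite_range ⇑b₀).isCompact_convexHull ℝ

lemma K₀_meas : MeasurableSet (convexHull ℝ (Set.range ⇑b₀)) :=
  (K₀_compact b₀).isClosed.measurableSet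

lemma cont_integrableOn {f : Evec d → ℝ} (hf : Continuous f) :
    IntegrableOn f (convexHull ℝ (Set.range ⇑b₀)) :=
  hf.continuousOn.integrableOn_compact (K₀_compact b₀)

/-- positivity of weighted L² norms of nonzero polynomials on the simplex -/
lemma pos_integral {P : MvPolynomial (Fin d) ℝ} (hP : P ≠ 0) {w : Evec d → ℝ}
    (hw : Continuous w) (hw0 : ∀ x ∈ convexHull ℝ (Set.range ⇑b₀), 0 ≤ w x)
    (hwpos : ∀ x ∈ interior (convexHull ℝ (Set.range ⇑b₀)), 0 < w x) :
    0 < ∫ x in convexHull ℝ (Set.range ⇑b₀), (ev P x)^2 * w x := by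
  set K₀ := convexHull ℝ (Set.range ⇑b₀) with hK₀
  have hmeas : MeasurableSet K₀ := K₀_meas b₀
  have hint : IntegrableOn (fun x => (ev P x)^2 * w x) K₀ :=
    cont_integrableOn b₀ (((ev_continuous P).pow 2).mul hw)
  have hnonneg : 0 ≤ᵐ[volume.restrict K₀] fun x => (ev P x)^2 * w x := by
    rw [Filter.EventuallyLE, ae_restrict_iff' hmeas]
    exact ae_of_all _ fun x hx => mul_nonneg (sq_nonneg _) (hw0 x hx)
  rw [setIntegral_pos_iff_support_of_nonneg_ae hnonneg hint]
  -- find a point where `ev P ≠ 0` in the interior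
  have hU : IsOpen (interior K₀) := isOpen_interior
  have hUne : (interior K₀).Nonempty := ⟨_, b₀.centroid_mem_interior_convexHull⟩
  have hx₀ : ∃ x₀ ∈ interior K₀, ev P x₀ ≠ 0 := by
    by_contra h
    push_neg at h
    exact hP (ev_eq_zero_of_eqOn_open hU hUne.choose_spec h)
  obtain ⟨x₀, hx₀U, hx₀ne⟩ := hx₀
  set W := interior K₀ ∩ {x | ev P x ≠ 0} with hW
  have hWopen : IsOpen W := hU.inter (isOpen_ne_fun (ev_continuous P) continuous_const)
  have hWsub : W ⊆ (Function.support fun x => (ev P x)^2 * w x) ∩ K₀ := by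
    intro x ⟨hx1, hx2⟩
    refine ⟨?_, interior_subset hx1⟩
    simp only [Function.mem_support]
    have : ev P x ≠ 0 := hx2
    exact ne_of_gt (mul_pos (by positivity) (hwpos x hx1))
  calc (0 : ENNReal) < volume W := hWopen.measure_pos volume ⟨x₀, hx₀U, hx₀ne⟩
  _ ≤ _ := measure_mono hWsub

end Ref

section Ref2
variable {d : ℕ} (b₀ : AffineBasis (Fin (d + 1)) ℝ (Evec d)) (k : ℕ)

lemma ev_sum_smul {n : ℕ} (p : Fin n → MvPolynomial (Fin d) ℝ) (c : Fin n → ℝ) (x : Evec d) :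
    ev (∑ i, c i • p i) x = ∑ i, c i * ev (p i) x := by
  simp only [ev, map_sum, MvPolynomial.smul_eval]

set_option maxHeartbeats 1000000 in
set_option synthInstance.maxHeartbeats 400000 in
/-- the reference estimate on a fixed simplex -/
lemma ref_est : ∃ m > (0:ℝ), ∀ P : MvPolynomial (Fin d) ℝ, P.totalDegree ≤ k →
    m * ∫ x in convexHull ℝ (Set.range ⇑b₀), (ev P x)^2
      ≤ ∫ x in convexHull ℝ (Set.range ⇑b₀), (ev P x)^2 * bubbleK b₀ x := by
  classical
  set K₀ := convexHull ℝ (Set.range ⇑b₀) with hK₀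
  have hmeas : MeasurableSet K₀ := K₀_meas b₀
  set V := MvPolynomial.restrictTotalDegree (Fin d) ℝ k with hV
  haveI : Module.Finite ℝ V := inferInstance
  set n := Module.finrank ℝ V with hn
  set pb : Module.Basis (Fin n) ℝ V := Module.finBasis ℝ V with hpb
  set p : Fin n → MvPolynomial (Fin d) ℝ := fun i => (pb i : MvPolynomial (Fin d) ℝ) with hp
  set a : Fin n → Evec d → ℝ := fun i => ev (p i) with ha
  -- the two weight functions
  set w₁ : Evec d → ℝ := fun _ => 1 with hw₁
  set w₂ : Evec d → ℝ := bubbleK b₀ with hw₂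
  have hw₁c : Continuous w₁ := continuous_const
  have hw₂c : Continuous w₂ := bubbleK_continuous b₀
  -- quadratic forms
  set M : (Evec d → ℝ) → Fin n → Fin n → ℝ :=
    fun w i j => ∫ x in K₀, a i x * a j x * w x with hM
  set qf : (Evec d → ℝ) → (Fin n → ℝ) → ℝ :=
    fun w c => ∑ i, ∑ j, c i * c j * M w i j with hqf
  have hqf_eq : ∀ (w : Evec d → ℝ), Continuous w → ∀ c : Fin n → ℝ,
      ∫ x in K₀, (∑ i, c i * a i x)^2 * w x = qf w c := by
    intro w hw c
    have hac : ∀ i, Continuous (a i) := fun i => ev_continuous (p i)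
    have hpt : ∀ x : Evec d, (∑ i, c i * a i x)^2 * w x
        = ∑ i, ∑ j, (c i * c j) * (a i x * a j x * w x) := by
      intro x
      rw [pow_two, Finset.sum_mul_sum, Finset.sum_mul]
      refine Finset.sum_congr rfl fun i _ => ?_
      rw [Finset.sum_mul]
      exact Finset.sum_congr rfl fun j _ => by ring
    rw [setIntegral_congr_fun hmeas (fun x _ => hpt x)]
    rw [integral_finset_sum]
    · refine Finset.sum_congr rfl fun i _ => ?_
      rw [integral_finset_sum]
      · exact Finset.sum_congr rfl fun j _ => by rw [integral_const_mul]
      · intro j _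
        exact (cont_integrableOn b₀ (continuous_const.mul (((hac i).mul (hac j)).mul hw)))
    · intro i _
      apply integrable_finset_sum
      intro j _
      exact (cont_integrableOn b₀ (continuous_const.mul (((hac i).mul (hac j)).mul hw)))
  -- homogeneity
  have hqf_smul : ∀ (w : Evec d → ℝ) (t : ℝ) (c : Fin n → ℝ),
      qf w (t • c) = t^2 * qf w c := by
    intro w t c
    simp only [hqf, Pi.smul_apply, smul_eq_mul, Finset.mul_sum]
    exact Finset.sum_congr rfl fun i _ => Finset.sum_congr rfl fun j _ => by ring
  -- the polynomial associated to a coefficient vector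
  set Pc : (Fin n → ℝ) → MvPolynomial (Fin d) ℝ := fun c => ∑ i, c i • p i with hPc
  have hPc_coe : ∀ c : Fin n → ℝ, Pc c = ((∑ i, c i • pb i : V) : MvPolynomial (Fin d) ℝ) := by
    intro c
    rw [hPc]
    push_cast
    rfl
  have hPc_ne : ∀ c : Fin n → ℝ, c ≠ 0 → Pc c ≠ 0 := by
    intro c hc h0
    apply hc
    rw [hPc_coe] at h0
    have : (∑ i, c i • pb i : V) = 0 := Submodule.coe_eq_zero.mp h0
    have h2 : pb.equivFun.symm c = 0 := by
      rw [Module.Basis.equivFun_symm_apply]; exact this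
    have := pb.equivFun.symm.injective (h2.trans (map_zero pb.equivFun.symm).symm)
    exact this
  have hPc_ev : ∀ (c : Fin n → ℝ) x, ev (Pc c) x = ∑ i, c i * a i x := fun c x =>
    ev_sum_smul p c x
  -- positivity of both quadratic forms away from 0
  have hqf_pos : ∀ (w : Evec d → ℝ), Continuous w → (∀ x ∈ K₀, 0 ≤ w x) →
      (∀ x ∈ interior K₀, 0 < w x) → ∀ c : Fin n → ℝ, c ≠ 0 → 0 < qf w c := by
    intro w hw hw0 hwp c hc
    rw [← hqf_eq w hw c]
    have := pos_integral b₀ (hPc_ne c hc) hw hw0 hwp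
    calc (0:ℝ) < ∫ x in K₀, (ev (Pc c) x)^2 * w x := this
    _ = _ := by
      refine setIntegral_congr_fun hmeas fun x _ => ?_
      rw [hPc_ev]
  have hw₁0 : ∀ x ∈ K₀, (0:ℝ) ≤ w₁ x := fun x _ => zero_le_one
  have hw₁p : ∀ x ∈ interior K₀, (0:ℝ) < w₁ x := fun x _ => zero_lt_one
  have hw₂0 : ∀ x ∈ K₀, 0 ≤ w₂ x := fun x hx => bubbleK_nonneg hx
  have hw₂p : ∀ x ∈ interior K₀, 0 < w₂ x := fun x hx => bubbleK_pos hx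
  -- compactness argument on the unit sphere
  haveI : Nontrivial V := by
    refine ⟨⟨1, ?_⟩, 0, ?_⟩
    · rw [hV, MvPolynomial.mem_restrictTotalDegree, MvPolynomial.totalDegree_one]
      exact Nat.zero_le k
    · intro h
      have h2 := congrArg (Subtype.val) h
      simp only at h2
      exact one_ne_zero h2
  have hnpos : 0 < n := Module.finrank_pos
  haveI : Nonempty (Fin n) := Fin.pos_iff_nonempty.mp hnpos
  have hSne : (Metric.sphere (0 : Fin n → ℝ) 1).Nonempty :=
    NormedSpace.sphere_nonempty.mpr zero_le_one
  have hScomp : IsCompact (Metric.sphere (0 : Fin n → ℝ) 1) := isCompact_sphere _ _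
  have hqfc : ∀ w : Evec d → ℝ, Continuous (fun c => qf w c) := by
    intro w
    apply continuous_finset_sum _ fun i _ => ?_
    apply continuous_finset_sum _ fun j _ => ?_
    exact ((continuous_apply i).mul (continuous_apply j)).mul continuous_const
  have hcont : ContinuousOn (fun c => qf w₂ c / qf w₁ c) (Metric.sphere 0 1) := by
    apply ContinuousOn.div (hqfc w₂).continuousOn (hqfc w₁).continuousOn
    intro c hc
    have hc0 : c ≠ 0 := by
      intro h
      rw [h] at hc
      simp at hc
    exact ne_of_gt (hqf_pos w₁ hw₁c hw₁0 hw₁p c hc0)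
  obtain ⟨u, huS, hminOn⟩ := hScomp.exists_isMinOn hSne hcont
  have hmin : ∀ y ∈ Metric.sphere (0 : Fin n → ℝ) 1, (fun c => qf w₂ c / qf w₁ c) u ≤ (fun c => qf w₂ c / qf w₁ c) y := fun y hy => hminOn hy
  have hu0 : u ≠ 0 := by
    intro h; rw [h] at huS; simp at huS
  set m := qf w₂ u / qf w₁ u with hm
  have hmpos : 0 < m :=
    div_pos (hqf_pos w₂ hw₂c hw₂0 hw₂p u hu0) (hqf_pos w₁ hw₁c hw₁0 hw₁p u hu0)
  refine ⟨m, hmpos, ?_⟩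
  intro P hPdeg
  rcases eq_or_ne P 0 with rfl | hPne
  · simp [ev]
  -- the coefficient vector of P
  have hPV : P ∈ V := by rw [hV, MvPolynomial.mem_restrictTotalDegree]; exact hPdeg
  set c : Fin n → ℝ := fun i => pb.repr ⟨P, hPV⟩ i with hc
  have hPrepr : Pc c = P := by
    rw [hPc_coe]
    exact congrArg Subtype.val (pb.sum_repr ⟨P, hPV⟩)
  have hceq : ∀ (w : Evec d → ℝ), Continuous w →
      ∫ x in K₀, (ev P x)^2 * w x = qf w c := by
    intro w hw
    rw [← hqf_eq w hw c]
    refine setIntegral_congr_fun hmeas fun x _ => ?_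
    rw [← hPrepr, hPc_ev]
  have hcne : c ≠ 0 := by
    intro h
    apply hPne
    rw [← hPrepr, hPc]
    refine Finset.sum_eq_zero fun i _ => ?_
    have h0 : c i = 0 := congrFun h i
    simp [h0]
  -- scale to the sphere
  set t : ℝ := ‖c‖ with ht
  have htpos : 0 < t := norm_pos_iff.mpr hcne
  set u' : Fin n → ℝ := t⁻¹ • c with hu'
  have hu'S : u' ∈ Metric.sphere (0 : Fin n → ℝ) 1 := by
    have hnorm : ‖u'‖ = 1 := by
      rw [hu', norm_smul, norm_inv, Real.norm_eq_abs, abs_of_pos htpos, ← ht,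
        inv_mul_cancel₀ (ne_of_gt htpos)]
    simpa [mem_sphere_iff_norm] using hnorm
  have hcu' : c = t • u' := by
    rw [hu', smul_smul, mul_inv_cancel₀ (ne_of_gt htpos), one_smul]
  have hkey : m * qf w₁ c ≤ qf w₂ c := by
    rw [hcu', hqf_smul w₁, hqf_smul w₂]
    have h1 : m ≤ qf w₂ u' / qf w₁ u' := hmin u' hu'S
    have h2 : 0 < qf w₁ u' := hqf_pos w₁ hw₁c hw₁0 hw₁p u' (by
      intro h; rw [h] at hu'S; simp at hu'S)
    have h3 : m * qf w₁ u' ≤ qf w₂ u' := by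
      rw [← le_div_iff₀ h2]; exact h1
    nlinarith [sq_nonneg t]
  calc m * ∫ x in K₀, (ev P x)^2
      = m * ∫ x in K₀, (ev P x)^2 * w₁ x := by
        congr 1
        refine setIntegral_congr_fun hmeas fun x _ => ?_
        rw [hw₁, mul_one]
    _ = m * qf w₁ c := by rw [hceq w₁ hw₁c]
    _ ≤ qf w₂ c := hkey
    _ = ∫ x in K₀, (ev P x)^2 * bubbleK b₀ x := (hceq w₂ hw₂c).symm

end Ref2

end Aux1

/-- bubble function norm equivalence
`c₁‖φ‖_{L²(K)} ≤ ‖φ b_K^{1/2}‖_{L²(K)} ≤ c₂‖φ‖_{L²(K)}` for `φ ∈ ℙ^k(K)`. -/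
theorem bubble_norm_equivalence {d : ℕ} (hd : 0 < d) (k : ℕ) (σ₀ : ℝ) (hσ₀ : 0 < σ₀) :
    ∃ c₁ > 0, ∃ c₂ > 0, ∀ b : AffineBasis (Fin (d + 1)) ℝ (Evec d),
      ∀ K : Set (Evec d), K = convexHull ℝ (Set.range ⇑b) →
      (∃ x r, 0 < r ∧ ball x r ⊆ K ∧ Metric.diam K ≤ σ₀ * (2 * r)) →
      ∀ P : MvPolynomial (Fin d) ℝ, P.totalDegree ≤ k →
        (c₁ * Real.sqrt (∫ x in K, (MvPolynomial.eval (fun i => x i) P)^2) ≤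
          Real.sqrt (∫ x in K,
            (MvPolynomial.eval (fun i => x i) P * Real.sqrt (bubbleK b x))^2)) ∧
        (Real.sqrt (∫ x in K,
            (MvPolynomial.eval (fun i => x i) P * Real.sqrt (bubbleK b x))^2) ≤
          c₂ * Real.sqrt (∫ x in K, (MvPolynomial.eval (fun i => x i) P)^2)) := by
  classical
  -- reference basis
  obtain ⟨b₀⟩ : Nonempty (AffineBasis (Fin (d + 1)) ℝ (Evec d)) :=
    AffineBasis.exists_affineBasis_of_finiteDimensional
      (by simp [finrank_euclideanSpace_fin])
  obtain ⟨m, hm, href⟩ := ref_est b₀ k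
  refine ⟨Real.sqrt m, Real.sqrt_pos.mpr hm, ((d : ℝ) + 1) ^ (d + 1), by positivity, ?_⟩
  intro b K hK _ P hPdeg
  have hKc : IsCompact K := hK ▸ (Set.finite_range ⇑b).isCompact_convexHull ℝ
  have hKm : MeasurableSet K := hKc.isClosed.measurableSet
  have hev : ∀ x : Evec d, MvPolynomial.eval (fun i => x i) P = ev P x := fun _ => rfl
  have hsq : ∀ x ∈ K, (ev P x * Real.sqrt (bubbleK b x)) ^ 2 = (ev P x) ^ 2 * bubbleK b x := by
    intro x hx
    rw [mul_pow, Real.sq_sqrt (bubbleK_nonneg (hK ▸ hx))]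
  have hIb : ∫ x in K, (ev P x * Real.sqrt (bubbleK b x)) ^ 2
      = ∫ x in K, (ev P x) ^ 2 * bubbleK b x := setIntegral_congr_fun hKm hsq
  -- change of variables to the reference simplex
  obtain ⟨Q, hQdeg, hQev⟩ := exists_comp_poly b₀ b P
  have h2 := href Q (hQdeg.trans hPdeg)
  set J := |LinearMap.det ((Lmap b₀ b : Evec d →ₗ[ℝ] Evec d))| with hJdef
  have hJ : 0 < J := det_Lmap_pos b₀ b
  have e1 : ∫ x in K, (ev P x) ^ 2
      = J * ∫ x in convexHull ℝ (Set.range ⇑b₀), (ev Q x) ^ 2 := by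
    rw [hK, integral_Fmap b₀ b (fun x => (ev P x) ^ 2)]
    congr 1
    exact setIntegral_congr_fun (K₀_meas b₀) fun x _ => by rw [hQev]
  have e2 : ∫ x in K, (ev P x) ^ 2 * bubbleK b x
      = J * ∫ x in convexHull ℝ (Set.range ⇑b₀), (ev Q x) ^ 2 * bubbleK b₀ x := by
    rw [hK, integral_Fmap b₀ b (fun x => (ev P x) ^ 2 * bubbleK b x)]
    congr 1
    refine setIntegral_congr_fun (K₀_meas b₀) fun x _ => ?_
    rw [hQev, bubbleK_Fmap]
  have hlow : m * ∫ x in K, (ev P x) ^ 2 ≤ ∫ x in K, (ev P x) ^ 2 * bubbleK b x := by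
    rw [e1, e2]
    calc m * (J * ∫ x in convexHull ℝ (Set.range ⇑b₀), (ev Q x) ^ 2)
        = J * (m * ∫ x in convexHull ℝ (Set.range ⇑b₀), (ev Q x) ^ 2) := by ring
      _ ≤ J * ∫ x in convexHull ℝ (Set.range ⇑b₀), (ev Q x) ^ 2 * bubbleK b₀ x :=
          mul_le_mul_of_nonneg_left h2 hJ.le
  constructor
  · -- lower bound
    simp only [hev]
    rw [hIb, ← Real.sqrt_mul hm.le]
    exact Real.sqrt_le_sqrt hlow
  · -- upper bound
    simp only [hev]
    rw [hIb]
    have hc2 : (1 : ℝ) ≤ ((d : ℝ) + 1) ^ (d + 1) :=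
      one_le_pow₀ (by norm_num : (1:ℝ) ≤ (d : ℝ) + 1)
    have hupper : ∫ x in K, (ev P x) ^ 2 * bubbleK b x
        ≤ (((d : ℝ) + 1) ^ (d + 1)) ^ 2 * ∫ x in K, (ev P x) ^ 2 := by
      have hint1 : IntegrableOn (fun x => (ev P x) ^ 2 * bubbleK b x) K :=
        (((ev_continuous P).pow 2).mul (bubbleK_continuous b)).continuousOn.integrableOn_compact
          hKc
      have hint2 : IntegrableOn (fun x => (((d : ℝ) + 1) ^ (d + 1)) ^ 2 * (ev P x) ^ 2) K :=
        (continuous_const.mul ((ev_continuous P).pow 2)).continuousOn.integrableOn_compact hKc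
      calc ∫ x in K, (ev P x) ^ 2 * bubbleK b x
          ≤ ∫ x in K, (((d : ℝ) + 1) ^ (d + 1)) ^ 2 * (ev P x) ^ 2 := by
            refine setIntegral_mono_on hint1 hint2 hKm fun x hx => ?_
            have hb := bubbleK_le (hK ▸ hx)
            have hb2 : bubbleK b x ≤ (((d : ℝ) + 1) ^ (d + 1)) ^ 2 := by
              nlinarith [bubbleK_nonneg (hK ▸ hx)]
            calc (ev P x) ^ 2 * bubbleK b x
                ≤ (ev P x) ^ 2 * (((d : ℝ) + 1) ^ (d + 1)) ^ 2 :=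
                  mul_le_mul_of_nonneg_left hb2 (sq_nonneg _)
              _ = (((d : ℝ) + 1) ^ (d + 1)) ^ 2 * (ev P x) ^ 2 := by ring
        _ = (((d : ℝ) + 1) ^ (d + 1)) ^ 2 * ∫ x in K, (ev P x) ^ 2 := integral_const_mul _ _
    calc Real.sqrt (∫ x in K, (ev P x) ^ 2 * bubbleK b x)
        ≤ Real.sqrt ((((d : ℝ) + 1) ^ (d + 1)) ^ 2 * ∫ x in K, (ev P x) ^ 2) :=
          Real.sqrt_le_sqrt hupper
      _ = ((d : ℝ) + 1) ^ (d + 1) * Real.sqrt (∫ x in K, (ev P x) ^ 2) := by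
          rw [Real.sqrt_mul (sq_nonneg _), Real.sqrt_sq (by positivity)]
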